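/- Let ψ be a unit vector in ℂ² ⊗ ℂⁿ (i.e., in the bipartite space where the first subsystem is a qubit). Then the partial transpose (|ψ⟩⟨ψ|)^Γ of the rank-one projection onto ψ has largest eigenvalue at least 1/2; equivalently, there exists a unit vector v with ⟨v, (ψψᴴ)^Γ v⟩ ≥ 1/2. -/

import Mathlib

open Matrix
open scoped ComplexOrder

noncomputable def traceNorm {ι : Type*} [Fintype ι] [DecidableEq ι]
    (A : Matrix ι ι ℂ) : ℝ :=
  (((Matrix.posSemidef_conjTranspose_mul_self A).1.eigenvectorUnitary : Matrix ι ι ℂ) *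
    Matrix.diagonal (fun i =>
      ((Real.sqrt ((Matrix.posSemidef_conjTranspose_mul_self A).1.eigenvalues i) : ℝ) : ℂ)) *
    (star ((Matrix.posSemidef_conjTranspose_mul_self A).1.eigenvectorUnitary : Matrix ι ι ℂ))).trace.re

noncomputable def mfun {ι : Type*} [Fintype ι] [DecidableEq ι] (g : ℝ → ℝ)
    (A : Matrix ι ι ℂ) : Matrix ι ι ℂ :=
  if hA : A.IsHermitian then
    (hA.eigenvectorUnitary : Matrix ι ι ℂ) *
      Matrix.diagonal (fun i => (g (hA.eigenvalues i) : ℂ)) *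
      (star hA.eigenvectorUnitary : Matrix ι ι ℂ)
  else 0

noncomputable def divDiff {ι : Type*} (g : ℝ → ℝ) (a : ι → ℝ) : Matrix ι ι ℝ :=
  Matrix.of fun i j =>
    if a i = a j then deriv g (a i) else (g (a i) - g (a j)) / (a i - a j)

noncomputable def Dop {ι : Type*} [Fintype ι] [DecidableEq ι] (g : ℝ → ℝ)
    {A : Matrix ι ι ℂ} (hA : A.IsHermitian) (B : Matrix ι ι ℂ) : Matrix ι ι ℂ :=
  (hA.eigenvectorUnitary : Matrix ι ι ℂ) *
    (((divDiff g hA.eigenvalues).map Complex.ofReal) ⊙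
      ((star hA.eigenvectorUnitary : Matrix ι ι ℂ) * B *
        (hA.eigenvectorUnitary : Matrix ι ι ℂ))) *
    (star hA.eigenvectorUnitary : Matrix ι ι ℂ)

noncomputable def relEnt {ι : Type*} [Fintype ι] [DecidableEq ι]
    (ρ σ : Matrix ι ι ℂ) : ℝ :=
  ((ρ * (mfun Real.log ρ - mfun Real.log σ)).trace).re

def ptrans {m n : Type*} (A : Matrix (m × n) (m × n) ℂ) : Matrix (m × n) (m × n) ℂ :=
  Matrix.of fun p q => A (p.1, q.2) (q.1, p.2)

theorem ptrans_rankOne_qubit_eigenvalue_ge_half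
    {n : ℕ} (ψ : Fin 2 × Fin n → ℂ) (hψ : ∑ p, Complex.normSq (ψ p) = 1) :
    ∃ v : Fin 2 × Fin n → ℂ, (∑ p, Complex.normSq (v p) = 1) ∧
      (1 / 2 : ℝ) ≤ (dotProduct (star v)
        (ptrans (Matrix.vecMulVec ψ (star ψ)) *ᵥ v)).re := by
  classical
  have hsum : (∑ j, Complex.normSq (ψ (0, j))) + (∑ j, Complex.normSq (ψ (1, j))) = 1 := by
    rw [← hψ, Fintype.sum_prod_type, Fin.sum_univ_two]
  obtain ⟨i₀, hi₀⟩ : ∃ i : Fin 2, (1/2:ℝ) ≤ ∑ j, Complex.normSq (ψ (i, j)) := by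
    by_contra h; push_neg at h
    have h0 := h 0; have h1 := h 1; linarith
  set A : ℝ := ∑ j, Complex.normSq (ψ (i₀, j)) with hAdef
  have hA0 : 0 < A := by linarith
  set r : ℝ := Real.sqrt A with hrdef
  have hr : r * r = A := Real.mul_self_sqrt hA0.le
  have hr0 : (0:ℝ) < r := Real.sqrt_pos.2 hA0
  refine ⟨fun p => if p.1 = i₀ then (starRingEnd ℂ) (ψ (i₀, p.2)) / (r:ℂ) else 0, ?_, ?_⟩
  · rw [Fintype.sum_prod_type]
    simp only [apply_ite Complex.normSq, Complex.normSq_zero, Finset.sum_ite_irrel,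
      Finset.sum_const_zero, Finset.sum_ite_eq', Finset.mem_univ, if_true]
    simp only [Complex.normSq_div, Complex.normSq_conj, Complex.normSq_ofReal, hr]
    rw [← Finset.sum_div, ← hAdef, div_self hA0.ne']
  · have key : ((star (fun p : Fin 2 × Fin n => if p.1 = i₀ then (starRingEnd ℂ) (ψ (i₀, p.2)) / (r:ℂ) else 0)) ⬝ᵥ
        (ptrans (vecMulVec ψ (star ψ)) *ᵥ (fun p : Fin 2 × Fin n => if p.1 = i₀ then (starRingEnd ℂ) (ψ (i₀, p.2)) / (r:ℂ) else 0))) = (A:ℂ) := by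
      simp only [dotProduct, mulVec, ptrans, vecMulVec, Matrix.of_apply, Pi.star_apply,
        apply_ite (star : ℂ → ℂ), star_zero, mul_ite, ite_mul, mul_zero, zero_mul]
      rw [Fintype.sum_prod_type]
      simp only [Fintype.sum_prod_type, Finset.sum_ite_irrel, Finset.sum_const_zero,
        Finset.sum_ite_eq', Finset.mem_univ, if_true]
      have hrc : (r:ℂ) * (r:ℂ) = (A:ℂ) := by norm_cast
      have hAne : (A:ℂ) ≠ 0 := by exact_mod_cast hA0.ne'
      calc (∑ x : Fin n, star ((starRingEnd ℂ) (ψ (i₀, x)) / (r:ℂ)) *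
            ∑ y : Fin n, ψ (i₀, y) * star (ψ (i₀, x)) * ((starRingEnd ℂ) (ψ (i₀, y)) / (r:ℂ)))
          = ∑ x : Fin n, (ψ (i₀, x) * (starRingEnd ℂ) (ψ (i₀, x)) / (r:ℂ)) *
            ∑ y : Fin n, (ψ (i₀, y) * (starRingEnd ℂ) (ψ (i₀, y)) / (r:ℂ)) := by
            refine Finset.sum_congr rfl fun x _ => ?_
            rw [Finset.mul_sum, Finset.mul_sum]
            refine Finset.sum_congr rfl fun y _ => ?_
            simp only [Complex.star_def, map_div₀, Complex.conj_conj, Complex.conj_ofReal]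
            ring
        _ = ((A:ℂ)/(r:ℂ)) * ((A:ℂ)/(r:ℂ)) := by
            rw [← Finset.sum_mul, ← Finset.sum_div]
            congr 2 <;>
            · rw [hAdef]; push_cast
              exact Finset.sum_congr rfl fun y _ => (Complex.mul_conj _)
        _ = (A:ℂ) := by
            rw [div_mul_div_comm, hrc, mul_div_assoc, div_self hAne, mul_one]
    rw [key]
    simpa using hi₀
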